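/- Let G be a simple graph on vertex set {u, v, w_1, ..., w_n} (n ≥ 2) in which u is adjacent exactly to v and to w_2, ..., w_n; v is adjacent exactly to u, w_1; and the set {w_1, ..., w_n} is independent with each w_i adjacent only as already described. If G' is any graph on the same vertex set with the same degrees related to G by a single 2-switch, then G' has the same form with w_1 replaced by some w_j, j ≠ 1. -/

import Mathlib

/-- Two unordered vertex pairs {a,b} and {c,d} are equal. -/
def pairEq {V : Type*} (a b c d : V) : Prop := (a = c ∧ b = d) ∨ (a = d ∧ b = c)

/-- `G'` is obtained from `G` by the 2-switch on the alternating 4-cycle `[u,v : w,x]`: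
`uv, wx` are edges of `G`, `ux, vw` are non-edges, the four vertices are distinct, and the
adjacency of exactly these four pairs is toggled. -/
def IsTwoSwitchAt {V : Type*} (G G' : SimpleGraph V) (u v w x : V) : Prop :=
  u ≠ v ∧ u ≠ w ∧ u ≠ x ∧ v ≠ w ∧ v ≠ x ∧ w ≠ x ∧
  G.Adj u v ∧ G.Adj w x ∧ ¬ G.Adj u x ∧ ¬ G.Adj v w ∧
  ∀ a b, G'.Adj a b ↔
    Xor' (G.Adj a b) (pairEq a b u v ∨ pairEq a b w x ∨ pairEq a b u x ∨ pairEq a b v w)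

/-- `G'` is obtained from `G` by a single 2-switch. -/
def IsTwoSwitch {V : Type*} (G G' : SimpleGraph V) : Prop :=
  ∃ u v w x, IsTwoSwitchAt G G' u v w x

/-- The degree of `y` in `G`, as the number of neighbors. -/
noncomputable def ndeg {V : Type*} (G : SimpleGraph V) (y : V) : ℕ := (G.neighborSet y).ncard

set_option maxHeartbeats 4000000

lemma pairEq_comm {V : Type*} (a b c d : V) : pairEq a b c d ↔ pairEq a b d c := or_comm

/-- if `G` is the realization of `(n, 2, 1^(n))` whose needle is at `w 0`
(`u` adjacent exactly to `v` and `w i` for `i ≠ 0`, `v` adjacent exactly to `u` and `w 0`,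
the `w i` otherwise isolated), and `G'` is any graph on the same vertex set with the same
degrees obtained from `G` by a single 2-switch, then `G'` has the same form with `w 0`
replaced by some `w j`, `j ≠ 0`. -/
theorem two_switch_moves_needle {V : Type*} [Fintype V] (n : ℕ) (hn : 2 ≤ n)
    (u v : V) (w : Fin n → V) (hw : Function.Injective w) (huv : u ≠ v)
    (hu : ∀ i, u ≠ w i) (hv : ∀ i, v ≠ w i)
    (hall : ∀ x : V, x = u ∨ x = v ∨ ∃ i, x = w i)
    (i₀ : Fin n) (G G' : SimpleGraph V)
    (hG : ∀ a b : V, G.Adj a b ↔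
      (pairEq a b u v ∨ (∃ i, i ≠ i₀ ∧ pairEq a b u (w i)) ∨ pairEq a b v (w i₀)))
    (hdeg : ∀ y : V, ndeg G' y = ndeg G y)
    (hsw : IsTwoSwitch G G') :
    ∃ j : Fin n, j ≠ i₀ ∧ ∀ a b : V, G'.Adj a b ↔
      (pairEq a b u v ∨ (∃ i, i ≠ j ∧ pairEq a b u (w i)) ∨ pairEq a b v (w j)) := by
  classical
  obtain ⟨p, q, r, s, hpq, hpr, hps, hqr, hqs, hrs, hApq, hArs, hnps, hnqr, htog⟩ := hsw
  have hGuv : G.Adj u v := (hG u v).2 (Or.inl (Or.inl ⟨rfl, rfl⟩))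
  have hu' : ∀ i, (u = w i) ↔ False := fun i => iff_false_intro (hu i)
  have hu'' : ∀ i, (w i = u) ↔ False := fun i => iff_false_intro (hu i).symm
  have hv' : ∀ i, (v = w i) ↔ False := fun i => iff_false_intro (hv i)
  have hv'' : ∀ i, (w i = v) ↔ False := fun i => iff_false_intro (hv i).symm
  have huv' : (u = v) ↔ False := iff_false_intro huv
  have hvu' : (v = u) ↔ False := iff_false_intro huv.symm
  have hww : ∀ i j, (w i = w j) ↔ i = j := fun i j => hw.eq_iff
  have hpq' := (hG p q).1 hApq
  have hrs' := (hG r s).1 hArs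
  simp only [pairEq] at hpq' hrs'
  clear hdeg
  have key : ∃ i : Fin n, i ≠ i₀ ∧
      ∀ a b : V, (pairEq a b p q ∨ pairEq a b r s ∨ pairEq a b p s ∨ pairEq a b q r) ↔
        (pairEq a b u (w i) ∨ pairEq a b u (w i₀) ∨ pairEq a b v (w i) ∨
          pairEq a b v (w i₀)) := by
    rcases hpq' with (⟨h1, h2⟩ | ⟨h1, h2⟩) | ⟨i, hi, (⟨h1, h2⟩ | ⟨h1, h2⟩)⟩ |
        (⟨h1, h2⟩ | ⟨h1, h2⟩) <;>
      rcases hrs' with (⟨h3, h4⟩ | ⟨h3, h4⟩) | ⟨i', hi', (⟨h3, h4⟩ | ⟨h3, h4⟩)⟩ |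
          (⟨h3, h4⟩ | ⟨h3, h4⟩) <;>
        simp only [h1, h2, h3, h4] at hpq hpr hps hqr hqs hrs hnps hnqr ⊢ <;>
          first
          | exact absurd rfl hpq
          | exact absurd rfl hpr
          | exact absurd rfl hps
          | exact absurd rfl hqr
          | exact absurd rfl hqs
          | exact absurd rfl hrs
          | exact absurd hGuv hnps
          | exact absurd hGuv hnqr
          | exact absurd hGuv.symm hnps
          | exact absurd hGuv.symm hnqr
          | exact ⟨i, hi, fun a b => by
              rw [pairEq_comm a b (w i) u, pairEq_comm a b (w i₀) v,
                pairEq_comm a b (w i) v]; tauto⟩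
          | exact ⟨i, hi, fun a b => by
              rw [pairEq_comm a b (w i) v]; tauto⟩
          | exact ⟨i', hi', fun a b => by
              rw [pairEq_comm a b (w i₀) v, pairEq_comm a b (w i') u,
                pairEq_comm a b (w i₀) u]; tauto⟩
          | exact ⟨i', hi', fun a b => by
              rw [pairEq_comm a b (w i₀) u]; tauto⟩
  obtain ⟨j, hj, hset⟩ := key
  refine ⟨j, hj, fun a b => ?_⟩
  rw [htog a b, hset a b, hG a b]
  clear htog hset hG hGuv hpq hpr hps hqr hqs hrs hApq hArs hnps hnqr hn
  rcases hall a with rfl | rfl | ⟨k, rfl⟩ <;> rcases hall b with rfl | rfl | ⟨l, rfl⟩ <;>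
    simp [pairEq, Xor', xor_def, hu', hu'', hv', hv'', huv', hvu', hww] <;>
    (try have hk : k = i₀ → k = j → False := fun h1 h2 => hj (h2 ▸ h1)) <;>
    (try have hl : l = i₀ → l = j → False := fun h1 h2 => hj (h2 ▸ h1)) <;>
    tauto
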